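/- Let U > 0. Define N(ε) = ⌊log_ε( ε·p / ((1−ε)·U) )⌋ for ε ∈ (0,1) with p ≤ (1 − ε)·U, and N(ε) = 0 for ε ∈ (0,1) with p > (1 − ε)·U. (i) If p ∈ (U/4, U), then N is nonincreasing on (0,1). (ii) If p ≥ U, then N(ε) = 0 for every ε ∈ (0,1). -/
import Mathlib


/-- Proposition 1, high price and non-participation ranges: for
the optimal prompt number `N ε = ⌊log_ε(ε p /((1-ε)U))⌋` (and `0` when
`p > (1-ε)U`): (i) if `p ∈ (U/4, U)` then `N` is nonincreasing on `(0,1)`;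
(ii) if `p ≥ U` then `N ε = 0` for all `ε ∈ (0,1)`. -/
theorem optimal_prompt_number_high_price
    (U p : ℝ) (hU : 0 < U)
    (N : ℝ → ℕ)
    (hN : ∀ ε ∈ Set.Ioo (0 : ℝ) 1,
      N ε = if p ≤ (1 - ε) * U
        then ⌊Real.logb ε (ε * p / ((1 - ε) * U))⌋₊ else 0) :
    (p ∈ Set.Ioo (U / 4) U →
      ∀ ε₁ ∈ Set.Ioo (0 : ℝ) 1, ∀ ε₂ ∈ Set.Ioo (0 : ℝ) 1,
        ε₁ ≤ ε₂ → N ε₂ ≤ N ε₁) ∧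
    (U ≤ p → ∀ ε ∈ Set.Ioo (0 : ℝ) 1, N ε = 0) := by
  constructor
  · rintro ⟨hp1, hp2⟩ ε₁ ⟨h10, h11⟩ ε₂ ⟨h20, h21⟩ h12
    have hp0 : 0 < p := lt_trans (by positivity) hp1
    have key : ∀ ε : ℝ, 0 < ε → ε < 1 → p ≤ (1 - ε) * U →
        ⌊Real.logb ε (ε * p / ((1 - ε) * U))⌋₊ = 1 := by
      intro ε hε0 hε1 hpε
      have hd : (0:ℝ) < (1 - ε) * U := by nlinarith
      have hx0 : 0 < ε * p / ((1 - ε) * U) := by positivity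
      have hlε : Real.log ε < 0 := Real.log_neg hε0 hε1
      have hxle : ε * p / ((1 - ε) * U) ≤ ε := by
        rw [div_le_iff₀ hd]; nlinarith
      have hxgt : ε ^ 2 < ε * p / ((1 - ε) * U) := by
        rw [lt_div_iff₀ hd]
        nlinarith [mul_nonneg (mul_nonneg hε0.le hU.le) (sq_nonneg (2*ε - 1)), mul_lt_mul_of_pos_left hp1 hε0]
      have hlog_le : Real.log (ε * p / ((1 - ε) * U)) ≤ Real.log ε :=
        Real.log_le_log hx0 hxle
      have hlog_gt : 2 * Real.log ε < Real.log (ε * p / ((1 - ε) * U)) := by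
        have := Real.log_lt_log (by positivity) hxgt
        rwa [Real.log_pow] at this
      have h1le : (1:ℝ) ≤ Real.logb ε (ε * p / ((1 - ε) * U)) := by
        rw [Real.logb, le_div_iff_of_neg hlε]; linarith
      have h2gt : Real.logb ε (ε * p / ((1 - ε) * U)) < 2 := by
        rw [Real.logb, div_lt_iff_of_neg hlε]; linarith
      rw [Nat.floor_eq_iff (by linarith)]
      constructor <;> [exact_mod_cast h1le; exact_mod_cast h2gt]
    rw [hN ε₁ ⟨h10, h11⟩, hN ε₂ ⟨h20, h21⟩]
    by_cases h2 : p ≤ (1 - ε₂) * U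
    · have h1 : p ≤ (1 - ε₁) * U := le_trans h2 (by nlinarith)
      rw [if_pos h1, if_pos h2, key ε₁ h10 h11 h1, key ε₂ h20 h21 h2]
    · rw [if_neg h2]; exact Nat.zero_le _
  · rintro hUp ε ⟨h0, h1⟩
    rw [hN ε ⟨h0, h1⟩, if_neg]
    push_neg
    nlinarith
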